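/- Suppose: (i) sup_t E[|U_t|⁴ + |Y_t|⁴] < ∞ (which holds when the closed-loop process {(U_t, Y_t)} is r-mean exponentially stable with r = 4); (ii) the prediction functions f_θ are uniformly stable, i.e. there exist C < ∞, C′ < ∞ and 0 < λ < 1, independent of θ, such that for all t > s > 0 and all arguments, |f_θ(u_{1:t−1}, y_{1:t−1}) − f_θ(u_{t−s+1:t−1}, y_{t−s+1:t−1})| ≤ C Σ_{k=1}^{t−s} λ^{t−k}(|u_k| + |y_k|), |f_θ(u_{1:t−1}, y_{1:t−1}) − f_θ(0, …, 0)| ≤ C Σ_{k=1}^{t−1} λ^{t−k}(|u_k| + |y_k|), and |f_θ(0, …, 0)| ≤ C′. Then the finite-memory approximation property (S1) holds: there exist C″ < ∞ and 0 < λ″ < 1, independent of θ, such that E[|ℓ_t(θ) − ℓ_{t,s}(θ)|²] ≤ C″·(λ″)^s for all 0 < s < t and all θ ∈ Θ. -/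

import Mathlib

open MeasureTheory Filter

noncomputable section

/-- Log-density of the Gaussian distribution `N(y; m, σ²)`. -/
def gaussLogLik (σ y m : ℝ) : ℝ :=
  Real.log ((Real.sqrt (2 * Real.pi) * σ)⁻¹ * Real.exp (-((y - m) ^ 2) / (2 * σ ^ 2)))

/-- The model prediction at (1-based) time `t`, using the whole past:
`Ŷ_t = f_θ(U_{1:t-1}, Y_{1:t-1})`.  Here `f θ n u y` is the prediction from `n` past
observations `u 0 = u_1, …, u (n-1) = u_n` (and similarly for `y`). -/
def predFull {Ω P : Type*} (f : P → ℕ → (ℕ → ℝ) → (ℕ → ℝ) → ℝ)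
    (U Y : ℕ → Ω → ℝ) (θ : P) (t : ℕ) (ω : Ω) : ℝ :=
  f θ (t - 1) (fun k => U (k + 1) ω) (fun k => Y (k + 1) ω)

/-- The finite-memory prediction at (1-based) time `t`, using only the last `s - 1`
observations: `Ŷ_{t,s} = f_θ(U_{t-s+1:t-1}, Y_{t-s+1:t-1})`. -/
def predFM {Ω P : Type*} (f : P → ℕ → (ℕ → ℝ) → (ℕ → ℝ) → ℝ)
    (U Y : ℕ → Ω → ℝ) (θ : P) (s t : ℕ) (ω : Ω) : ℝ :=
  f θ (s - 1) (fun k => U (t - s + 1 + k) ω) (fun k => Y (t - s + 1 + k) ω)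

/-! ### Auxiliary lemmas -/

lemma gaussLogLik_sub (σ y m₁ m₂ : ℝ) (hσ : 0 < σ) :
    gaussLogLik σ y m₁ - gaussLogLik σ y m₂ = ((y - m₂)^2 - (y - m₁)^2) / (2 * σ^2) := by
  have hc : (Real.sqrt (2 * Real.pi) * σ) ≠ 0 := by positivity
  unfold gaussLogLik
  rw [Real.log_mul (inv_ne_zero hc) (Real.exp_ne_zero _),
    Real.log_mul (inv_ne_zero hc) (Real.exp_ne_zero _), Real.log_exp, Real.log_exp]
  ring

lemma cs_step (F : Finset ℕ) (w b : ℕ → ℝ) (hw : ∀ k ∈ F, 0 ≤ w k) :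
    (∑ k ∈ F, w k * b k)^2 ≤ (∑ k ∈ F, w k) * ∑ k ∈ F, w k * (b k)^2 :=
  Finset.sum_sq_le_sum_mul_sum_of_sq_eq_mul F hw
    (fun k hk => mul_nonneg (hw k hk) (sq_nonneg _)) (fun k _ => by ring)

lemma jensen4 (F : Finset ℕ) (w b : ℕ → ℝ) (hw : ∀ k ∈ F, 0 ≤ w k) :
    (∑ k ∈ F, w k * b k)^4 ≤ (∑ k ∈ F, w k)^3 * ∑ k ∈ F, w k * (b k)^4 := by
  have h1 := cs_step F w b hw
  have h2 := cs_step F w (fun k => (b k)^2) hw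
  have hWnn : 0 ≤ ∑ k ∈ F, w k := Finset.sum_nonneg hw
  have hb2 : ∀ k ∈ F, w k * ((b k)^2)^2 = w k * (b k)^4 := fun k _ => by ring
  rw [Finset.sum_congr rfl hb2] at h2
  calc (∑ k ∈ F, w k * b k)^4 = ((∑ k ∈ F, w k * b k)^2)^2 := by ring
    _ ≤ ((∑ k ∈ F, w k) * ∑ k ∈ F, w k * (b k)^2)^2 :=
        pow_le_pow_left₀ (sq_nonneg _) h1 2
    _ = (∑ k ∈ F, w k)^2 * (∑ k ∈ F, w k * (b k)^2)^2 := by ring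
    _ ≤ (∑ k ∈ F, w k)^2 * ((∑ k ∈ F, w k) * ∑ k ∈ F, w k * (b k)^4) :=
        mul_le_mul_of_nonneg_left h2 (by positivity)
    _ = (∑ k ∈ F, w k)^3 * ∑ k ∈ F, w k * (b k)^4 := by ring

lemma p4 (x y : ℝ) : (x + y)^4 ≤ 8 * (x^4 + y^4) := by
  nlinarith [sq_nonneg (x - y), sq_nonneg (x + y), sq_nonneg (x^2 - y^2), sq_nonneg (x*y)]

lemma geomW {lam : ℝ} (hlam0 : 0 < lam) (hlam1 : lam < 1) (n : ℕ) (e : ℕ → ℕ)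
    (he : ∀ k ∈ Finset.range n, n - 1 - k ≤ e k) :
    ∑ k ∈ Finset.range n, lam ^ e k ≤ (1 - lam)⁻¹ := by
  have h1 : ∑ k ∈ Finset.range n, lam ^ e k ≤ ∑ k ∈ Finset.range n, lam ^ (n - 1 - k) :=
    Finset.sum_le_sum fun k hk => pow_le_pow_of_le_one hlam0.le hlam1.le (he k hk)
  have h2 : ∑ k ∈ Finset.range n, lam ^ (n - 1 - k) = ∑ k ∈ Finset.range n, lam ^ k :=
    Finset.sum_range_reflect (fun k => lam ^ k) n
  have h3 : ∑ k ∈ Finset.range n, lam ^ k ≤ (1 - lam)⁻¹ := by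
    have hne : lam ≠ 1 := ne_of_lt hlam1
    rw [geom_sum_eq hne]
    rw [div_le_iff_of_neg (by linarith : lam - 1 < 0)]
    have he2 : (1 - lam)⁻¹ * (lam - 1) = -1 := by
      rw [inv_mul_eq_div, div_eq_iff (by linarith : (1:ℝ) - lam ≠ 0)]; ring
    rw [he2]
    have : (0:ℝ) ≤ lam ^ n := by positivity
    linarith
  linarith

/-- Fourth power of a geometrically weighted sum, bounded via Jensen/Cauchy–Schwarz. -/
lemma sum_pow4_bound {lam : ℝ} (hlam0 : 0 < lam) (hlam1 : lam < 1) (n : ℕ) (e : ℕ → ℕ)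
    (he : ∀ k ∈ Finset.range n, n - 1 - k ≤ e k) (b B : ℕ → ℝ)
    (hbB : ∀ k, (b k)^4 ≤ 8 * B k) :
    (∑ k ∈ Finset.range n, lam ^ e k * b k)^4
      ≤ 8 * ((1 - lam)⁻¹)^3 * ∑ k ∈ Finset.range n, lam ^ e k * B k := by
  have hw : ∀ k ∈ Finset.range n, 0 ≤ lam ^ e k := fun k _ => pow_nonneg hlam0.le _
  have hsum : ∑ k ∈ Finset.range n, lam ^ e k ≤ (1 - lam)⁻¹ := geomW hlam0 hlam1 n e he
  have hsum0 : 0 ≤ ∑ k ∈ Finset.range n, lam ^ e k := Finset.sum_nonneg hw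
  have hb40 : 0 ≤ ∑ k ∈ Finset.range n, lam ^ e k * (b k)^4 :=
    Finset.sum_nonneg fun k hk => mul_nonneg (hw k hk) (by positivity)
  have hW0 : (0:ℝ) ≤ (1 - lam)⁻¹ := le_trans hsum0 hsum
  calc (∑ k ∈ Finset.range n, lam ^ e k * b k)^4
      ≤ (∑ k ∈ Finset.range n, lam ^ e k)^3 * ∑ k ∈ Finset.range n, lam ^ e k * (b k)^4 :=
        jensen4 _ _ _ hw
    _ ≤ ((1 - lam)⁻¹)^3 * ∑ k ∈ Finset.range n, lam ^ e k * (b k)^4 :=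
        mul_le_mul_of_nonneg_right (pow_le_pow_left₀ hsum0 hsum 3) hb40
    _ ≤ ((1 - lam)⁻¹)^3 * ∑ k ∈ Finset.range n, lam ^ e k * (8 * B k) := by
        refine mul_le_mul_of_nonneg_left (Finset.sum_le_sum fun k hk => ?_) (by positivity)
        exact mul_le_mul_of_nonneg_left (hbB k) (hw k hk)
    _ = 8 * ((1 - lam)⁻¹)^3 * ∑ k ∈ Finset.range n, lam ^ e k * B k := by
        simp only [Finset.mul_sum]
        exact Finset.sum_congr rfl fun k _ => by ring

/-- Integral of a weighted sum of uniformly integrable nonnegative terms. -/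
lemma integral_weighted_le {Ω : Type*} [MeasurableSpace Ω] (μ : Measure Ω)
    (A : ℕ → Ω → ℝ) (hint : ∀ k, Integrable (A k) μ) (M : ℝ)
    (hMA : ∀ k, ∫ ω, A k ω ∂μ ≤ M) (hM0 : 0 ≤ M)
    (w : ℕ → ℝ) (hw : ∀ k, 0 ≤ w k) (F : Finset ℕ) (Wb : ℝ)
    (hWsum : ∑ k ∈ F, w k ≤ Wb) :
    ∫ ω, ∑ k ∈ F, w k * A k ω ∂μ ≤ Wb * M := by
  rw [integral_finset_sum F (fun k _ => (hint k).const_mul (w k))]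
  calc ∑ k ∈ F, ∫ ω, w k * A k ω ∂μ = ∑ k ∈ F, w k * ∫ ω, A k ω ∂μ :=
        Finset.sum_congr rfl fun k _ => integral_const_mul (w k) (A k)
    _ ≤ ∑ k ∈ F, w k * M := Finset.sum_le_sum fun k _ =>
        mul_le_mul_of_nonneg_left (hMA k) (hw k)
    _ = (∑ k ∈ F, w k) * M := by rw [Finset.sum_mul]
    _ ≤ Wb * M := mul_le_mul_of_nonneg_right hWsum hM0

set_option maxHeartbeats 2000000 in
theorem uniformly_stable_gaussian_models_satisfy_S1
    {Ω : Type*} [MeasurableSpace Ω] (μ : Measure Ω) [IsProbabilityMeasure μ]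
    {P : Type*} (Θ : Set P)
    (U Y : ℕ → Ω → ℝ) (hUmeas : ∀ t, Measurable (U t)) (hYmeas : ∀ t, Measurable (Y t))
    -- Gaussian models with fixed variance `σ² > 0`
    (σ : ℝ) (hσ : 0 < σ)
    (f : P → ℕ → (ℕ → ℝ) → (ℕ → ℝ) → ℝ)
    (hfmeas : ∀ θ n, Measurable (fun p : (ℕ → ℝ) × (ℕ → ℝ) => f θ n p.1 p.2))
    -- (i) `sup_t E[|U_t|⁴ + |Y_t|⁴] < ∞`
    (M : ℝ)
    (hint4 : ∀ t, Integrable (fun ω => |U t ω| ^ 4 + |Y t ω| ^ 4) μ)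
    (hM : ∀ t, ∫ ω, (|U t ω| ^ 4 + |Y t ω| ^ 4) ∂μ ≤ M)
    -- (ii) uniform stability of the prediction functions `f_θ`, with constants
    -- `C, C′ < ∞` and `0 < λ < 1` independent of `θ`
    (C C' lam : ℝ) (hlam0 : 0 < lam) (hlam1 : lam < 1)
    (hstab1 : ∀ θ ∈ Θ, ∀ t s : ℕ, 0 < s → s < t → ∀ u y : ℕ → ℝ,
      |f θ (t - 1) u y - f θ (s - 1) (fun k => u (t - s + k)) (fun k => y (t - s + k))|
        ≤ C * ∑ k ∈ Finset.range (t - s), lam ^ (t - (k + 1)) * (|u k| + |y k|))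
    (hstab2 : ∀ θ ∈ Θ, ∀ t : ℕ, 0 < t → ∀ u y : ℕ → ℝ,
      |f θ (t - 1) u y - f θ (t - 1) (fun _ => 0) (fun _ => 0)|
        ≤ C * ∑ k ∈ Finset.range (t - 1), lam ^ (t - (k + 1)) * (|u k| + |y k|))
    (hstab3 : ∀ θ ∈ Θ, ∀ n : ℕ, |f θ n (fun _ => 0) (fun _ => 0)| ≤ C') :
    -- conclusion: the finite-memory approximation property (S1) holds, with
    -- constants `C″ < ∞` and `0 < λ″ < 1` independent of `θ`
    ∃ C'' lam'' : ℝ, 0 < lam'' ∧ lam'' < 1 ∧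
      ∀ θ ∈ Θ, ∀ t s : ℕ, 0 < s → s < t →
        ∫⁻ ω, ENNReal.ofReal
            (|gaussLogLik σ (Y t ω) (predFull f U Y θ t ω) -
              gaussLogLik σ (Y t ω) (predFM f U Y θ s t ω)| ^ 2) ∂μ
          ≤ ENNReal.ofReal (C'' * lam'' ^ s) := by
  -- abbreviations for the constants
  set C0 : ℝ := max C 0 with hC0def
  set C0' : ℝ := max C' 0 with hC0'def
  set W : ℝ := (1 - lam)⁻¹ with hWdef
  have hC00 : 0 ≤ C0 := le_max_right C 0
  have hC0'0 : 0 ≤ C0' := le_max_right C' 0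
  have hW0 : 0 < W := by rw [hWdef]; exact inv_pos.mpr (by linarith)
  have hM0 : 0 ≤ M := le_trans (integral_nonneg fun ω => by positivity) (hM 0)
  refine ⟨C0^2/(8*σ^4) * (8*W^4*M + 1024*M + 1024*C0^4*W^4*M + 1024*C0'^4), lam^2,
    by positivity, pow_lt_one₀ hlam0.le hlam1 two_ne_zero, ?_⟩
  intro θ hθ t s hs hst
  have ht : 0 < t := hs.trans hst
  -- the dominating function H
  set H : Ω → ℝ := fun ω =>
    C0^2/(8*σ^4) *
      (8*W^3 * (∑ k ∈ Finset.range (t-s), lam^(t-s-1-k) * (|U (k+1) ω|^4 + |Y (k+1) ω|^4))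
      + 1024 * (|U t ω|^4 + |Y t ω|^4)
      + 512*C0^4*W^3 *
          ((∑ k ∈ Finset.range (t-1), lam^(t-(k+1)) * (|U (k+1) ω|^4 + |Y (k+1) ω|^4))
          + (∑ k ∈ Finset.range (s-1), lam^(s-(k+1)) * (|U (t-s+k+1) ω|^4 + |Y (t-s+k+1) ω|^4)))
      + 1024*C0'^4) with hHdef
  -- pointwise bound
  have hpt : ∀ ω : Ω,
      |gaussLogLik σ (Y t ω) (predFull f U Y θ t ω) -
        gaussLogLik σ (Y t ω) (predFM f U Y θ s t ω)| ^ 2 ≤ (lam^2)^s * H ω := by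
    intro ω
    have h2σ : (0:ℝ) < 2*σ^2 := by positivity
    have h8σ : (0:ℝ) < 8*σ^4 := by positivity
    have eFM : predFM f U Y θ s t ω
        = f θ (s-1) (fun k => U (t-s+k+1) ω) (fun k => Y (t-s+k+1) ω) := by
      unfold predFM
      have h1 : (fun k => U (t-s+1+k) ω) = (fun k => U (t-s+k+1) ω) := by
        funext k; have he : t-s+1+k = t-s+k+1 := by omega
        rw [he]
      have h2 : (fun k => Y (t-s+1+k) ω) = (fun k => Y (t-s+k+1) ω) := by
        funext k; have he : t-s+1+k = t-s+k+1 := by omega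
        rw [he]
      rw [h1, h2]
    set m₁ : ℝ := predFull f U Y θ t ω with hm₁def
    set m₂ : ℝ := predFM f U Y θ s t ω with hm₂def
    set yy : ℝ := Y t ω with hyydef
    set S : ℝ := ∑ k ∈ Finset.range (t-s), lam^(t-s-1-k) * (|U (k+1) ω| + |Y (k+1) ω|)
      with hSdef
    set T₁ : ℝ := ∑ k ∈ Finset.range (t-1), lam^(t-(k+1)) * (|U (k+1) ω| + |Y (k+1) ω|)
      with hT₁def
    set T₂ : ℝ := ∑ k ∈ Finset.range (s-1), lam^(s-(k+1)) * (|U (t-s+k+1) ω| + |Y (t-s+k+1) ω|)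
      with hT₂def
    have hS0 : 0 ≤ S := Finset.sum_nonneg fun k _ => by positivity
    have hT₁0 : 0 ≤ T₁ := Finset.sum_nonneg fun k _ => by positivity
    have hT₂0 : 0 ≤ T₂ := Finset.sum_nonneg fun k _ => by positivity
    -- bound on |m₁ - m₂|
    have hΔ : |m₁ - m₂| ≤ C0 * (lam^s * S) := by
      have h := hstab1 θ hθ t s hs hst (fun k => U (k+1) ω) (fun k => Y (k+1) ω)
      have hsplit : ∑ k ∈ Finset.range (t-s), lam^(t-(k+1)) * (|U (k+1) ω| + |Y (k+1) ω|)
          = lam^s * S := by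
        rw [hSdef, Finset.mul_sum]
        refine Finset.sum_congr rfl fun k hk => ?_
        have hk' := Finset.mem_range.mp hk
        have he : t-(k+1) = s+(t-s-1-k) := by omega
        rw [he, pow_add, mul_assoc]
      calc |m₁ - m₂|
          ≤ C * ∑ k ∈ Finset.range (t-s), lam^(t-(k+1)) * (|U (k+1) ω| + |Y (k+1) ω|) := by
            rw [eFM]; exact h
        _ ≤ C0 * ∑ k ∈ Finset.range (t-s), lam^(t-(k+1)) * (|U (k+1) ω| + |Y (k+1) ω|) :=
            mul_le_mul_of_nonneg_right (le_max_left C 0)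
              (Finset.sum_nonneg fun k _ => by positivity)
        _ = C0 * (lam^s * S) := by rw [hsplit]
    -- bounds on |m₁| and |m₂|
    have hm₁b : |m₁| ≤ C0 * T₁ + C0' := by
      have h := hstab2 θ hθ t ht (fun k => U (k+1) ω) (fun k => Y (k+1) ω)
      have h3 := hstab3 θ hθ (t-1)
      calc |m₁| ≤ |m₁ - f θ (t-1) (fun _ => 0) (fun _ => 0)|
            + |f θ (t-1) (fun _ => 0) (fun _ => 0)| := by
            have h4 := abs_add_le (m₁ - f θ (t-1) (fun _ => 0) (fun _ => 0))
              (f θ (t-1) (fun _ => 0) (fun _ => 0))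
            simpa using h4
        _ ≤ C * T₁ + C' := add_le_add h h3
        _ ≤ C0 * T₁ + C0' := add_le_add
            (mul_le_mul_of_nonneg_right (le_max_left C 0) hT₁0) (le_max_left C' 0)
    have hm₂b : |m₂| ≤ C0 * T₂ + C0' := by
      have h := hstab2 θ hθ s hs (fun k => U (t-s+k+1) ω) (fun k => Y (t-s+k+1) ω)
      have h3 := hstab3 θ hθ (s-1)
      calc |m₂| ≤ |m₂ - f θ (s-1) (fun _ => 0) (fun _ => 0)|
            + |f θ (s-1) (fun _ => 0) (fun _ => 0)| := by
            have h4 := abs_add_le (m₂ - f θ (s-1) (fun _ => 0) (fun _ => 0))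
              (f θ (s-1) (fun _ => 0) (fun _ => 0))
            simpa using h4
        _ ≤ C * T₂ + C' := by
            refine add_le_add ?_ h3
            rw [eFM]; exact h
        _ ≤ C0 * T₂ + C0' := add_le_add
            (mul_le_mul_of_nonneg_right (le_max_left C 0) hT₂0) (le_max_left C' 0)
    -- the difference of log-likelihoods
    set G : ℝ := 2*|yy| + (C0*T₁+C0') + (C0*T₂+C0') with hGdef
    have hG0 : 0 ≤ G := by
      rw [hGdef]
      have a1 := abs_nonneg m₁; have a2 := abs_nonneg m₂; have a3 := abs_nonneg yy
      linarith [hm₁b, hm₂b]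
    have habs_sub : ∀ p q : ℝ, |p - q| ≤ |p| + |q| := by
      intro p q
      rw [sub_eq_add_neg]
      exact (abs_add_le p (-q)).trans (by rw [abs_neg])
    have hnum : |(yy-m₂)^2-(yy-m₁)^2| ≤ |m₁-m₂| * G := by
      have hfac : (yy-m₂)^2-(yy-m₁)^2 = (m₁-m₂)*((yy-m₁)+(yy-m₂)) := by ring
      rw [hfac, abs_mul]
      refine mul_le_mul_of_nonneg_left ?_ (abs_nonneg _)
      have h1 : |(yy-m₁)+(yy-m₂)| ≤ |yy-m₁| + |yy-m₂| := abs_add_le _ _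
      have h2 := habs_sub yy m₁
      have h3 := habs_sub yy m₂
      rw [hGdef]; linarith [hm₁b, hm₂b]
    have hd : |gaussLogLik σ yy m₁ - gaussLogLik σ yy m₂| ≤ (|m₁ - m₂| * G) / (2*σ^2) := by
      calc |gaussLogLik σ yy m₁ - gaussLogLik σ yy m₂|
          = |(yy-m₂)^2-(yy-m₁)^2| / (2*σ^2) := by
            rw [gaussLogLik_sub σ yy m₁ m₂ hσ, abs_div, abs_of_pos h2σ]
        _ ≤ (|m₁ - m₂| * G) / (2*σ^2) := by
            exact div_le_div_of_nonneg_right hnum h2σ.le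
    set D : ℝ := |gaussLogLik σ yy m₁ - gaussLogLik σ yy m₂| with hDdef
    have hD0 : 0 ≤ D := abs_nonneg _
    have hdN : D * (2*σ^2) ≤ |m₁ - m₂| * G := by
      rw [← le_div_iff₀ h2σ]; exact hd
    have hNle : |m₁ - m₂| * G ≤ (C0 * (lam^s * S)) * G := mul_le_mul_of_nonneg_right hΔ hG0
    have h4 : (D*(2*σ^2))^2 ≤ ((C0*(lam^s*S))*G)^2 :=
      pow_le_pow_left₀ (by positivity) (hdN.trans hNle) 2
    have hls : (lam^s)^2 = (lam^2)^s := by rw [← pow_mul, ← pow_mul, Nat.mul_comm]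
    have h5 : 4*σ^4*D^2 ≤ C0^2*(lam^2)^s*(S^2*G^2) := by
      have e1 : (D*(2*σ^2))^2 = 4*σ^4*D^2 := by ring
      have e2 : ((C0*(lam^s*S))*G)^2 = C0^2*((lam^s)^2)*(S^2*G^2) := by ring
      rw [e1, e2, hls] at h4; exact h4
    have hC0P : (0:ℝ) ≤ C0^2*(lam^2)^s := by positivity
    have h6 : 2*(S^2*G^2) ≤ S^4 + G^4 := by nlinarith [sq_nonneg (S^2 - G^2)]
    have h8 : C0^2*(lam^2)^s*(2*(S^2*G^2)) ≤ C0^2*(lam^2)^s*(S^4+G^4) :=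
      mul_le_mul_of_nonneg_left h6 hC0P
    have h7 : 8*σ^4*D^2 ≤ C0^2*(lam^2)^s*(S^4+G^4) := by linarith [h5, h8]
    -- fourth-power bounds for the weighted sums
    have hS4 : S^4 ≤ 8*W^3 *
        ∑ k ∈ Finset.range (t-s), lam^(t-s-1-k) * (|U (k+1) ω|^4 + |Y (k+1) ω|^4) := by
      rw [hSdef, hWdef]
      exact sum_pow4_bound hlam0 hlam1 (t-s) (fun k => t-s-1-k)
        (fun k hk => by (try simp only []); omega)
        (fun k => |U (k+1) ω| + |Y (k+1) ω|) (fun k => |U (k+1) ω|^4 + |Y (k+1) ω|^4)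
        (fun k => p4 _ _)
    have hT₁4 : T₁^4 ≤ 8*W^3 *
        ∑ k ∈ Finset.range (t-1), lam^(t-(k+1)) * (|U (k+1) ω|^4 + |Y (k+1) ω|^4) := by
      rw [hT₁def, hWdef]
      exact sum_pow4_bound hlam0 hlam1 (t-1) (fun k => t-(k+1))
        (fun k hk => by (try simp only []); have := Finset.mem_range.mp hk; omega)
        (fun k => |U (k+1) ω| + |Y (k+1) ω|) (fun k => |U (k+1) ω|^4 + |Y (k+1) ω|^4)
        (fun k => p4 _ _)
    have hT₂4 : T₂^4 ≤ 8*W^3 *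
        ∑ k ∈ Finset.range (s-1), lam^(s-(k+1)) * (|U (t-s+k+1) ω|^4 + |Y (t-s+k+1) ω|^4) := by
      rw [hT₂def, hWdef]
      exact sum_pow4_bound hlam0 hlam1 (s-1) (fun k => s-(k+1))
        (fun k hk => by (try simp only []); have := Finset.mem_range.mp hk; omega)
        (fun k => |U (t-s+k+1) ω| + |Y (t-s+k+1) ω|)
        (fun k => |U (t-s+k+1) ω|^4 + |Y (t-s+k+1) ω|^4)
        (fun k => p4 _ _)
    -- bound on G⁴
    have hy4 : |yy|^4 ≤ |U t ω|^4 + |Y t ω|^4 := by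
      rw [hyydef]
      have h0 : (0:ℝ) ≤ |U t ω|^4 := by positivity
      linarith
    have hG4 : G^4 ≤ 1024 * (|U t ω|^4 + |Y t ω|^4)
        + 512*C0^4*W^3 *
          ((∑ k ∈ Finset.range (t-1), lam^(t-(k+1)) * (|U (k+1) ω|^4 + |Y (k+1) ω|^4))
          + (∑ k ∈ Finset.range (s-1), lam^(s-(k+1)) * (|U (t-s+k+1) ω|^4 + |Y (t-s+k+1) ω|^4)))
        + 1024*C0'^4 := by
      have g0 : G = (2*|yy|+C0*T₁) + (C0*T₂+2*C0') := by rw [hGdef]; ring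
      have g1 : G^4 ≤ 8*((2*|yy|+C0*T₁)^4 + (C0*T₂+2*C0')^4) := by
        rw [g0]; exact p4 _ _
      have g2 := p4 (2*|yy|) (C0*T₁)
      have g3 := p4 (C0*T₂) (2*C0')
      have g4 : 64*C0^4*T₁^4 ≤ 64*C0^4*(8*W^3 *
          ∑ k ∈ Finset.range (t-1), lam^(t-(k+1)) * (|U (k+1) ω|^4 + |Y (k+1) ω|^4)) :=
        mul_le_mul_of_nonneg_left hT₁4 (by positivity)
      have g5 : 64*C0^4*T₂^4 ≤ 64*C0^4*(8*W^3 *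
          ∑ k ∈ Finset.range (s-1), lam^(s-(k+1)) * (|U (t-s+k+1) ω|^4 + |Y (t-s+k+1) ω|^4)) :=
        mul_le_mul_of_nonneg_left hT₂4 (by positivity)
      linarith [g1, g2, g3, g4, g5, hy4]
    -- combine everything
    have h9 : C0^2*(lam^2)^s*(S^4+G^4) ≤ C0^2*(lam^2)^s*
        ((8*W^3 * (∑ k ∈ Finset.range (t-s), lam^(t-s-1-k) * (|U (k+1) ω|^4 + |Y (k+1) ω|^4)))
        + (1024 * (|U t ω|^4 + |Y t ω|^4)
          + 512*C0^4*W^3 *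
            ((∑ k ∈ Finset.range (t-1), lam^(t-(k+1)) * (|U (k+1) ω|^4 + |Y (k+1) ω|^4))
            + (∑ k ∈ Finset.range (s-1), lam^(s-(k+1)) * (|U (t-s+k+1) ω|^4 + |Y (t-s+k+1) ω|^4)))
          + 1024*C0'^4)) :=
      mul_le_mul_of_nonneg_left (add_le_add hS4 hG4) hC0P
    have hfin : D^2 * (8*σ^4) ≤ (lam^2)^s * (C0^2 *
        (8*W^3 * (∑ k ∈ Finset.range (t-s), lam^(t-s-1-k) * (|U (k+1) ω|^4 + |Y (k+1) ω|^4))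
        + 1024 * (|U t ω|^4 + |Y t ω|^4)
        + 512*C0^4*W^3 *
            ((∑ k ∈ Finset.range (t-1), lam^(t-(k+1)) * (|U (k+1) ω|^4 + |Y (k+1) ω|^4))
            + (∑ k ∈ Finset.range (s-1), lam^(s-(k+1)) * (|U (t-s+k+1) ω|^4 + |Y (t-s+k+1) ω|^4)))
        + 1024*C0'^4)) := by linarith [h7, h9]
    -- conclude the pointwise bound
    show D^2 ≤ (lam^2)^s * H ω
    simp only [hHdef]
    rw [show (lam^2)^s * (C0^2/(8*σ^4) *
        (8*W^3 * (∑ k ∈ Finset.range (t-s), lam^(t-s-1-k) * (|U (k+1) ω|^4 + |Y (k+1) ω|^4))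
        + 1024 * (|U t ω|^4 + |Y t ω|^4)
        + 512*C0^4*W^3 *
            ((∑ k ∈ Finset.range (t-1), lam^(t-(k+1)) * (|U (k+1) ω|^4 + |Y (k+1) ω|^4))
            + (∑ k ∈ Finset.range (s-1), lam^(s-(k+1)) * (|U (t-s+k+1) ω|^4 + |Y (t-s+k+1) ω|^4)))
        + 1024*C0'^4))
        = ((lam^2)^s * (C0^2 *
        (8*W^3 * (∑ k ∈ Finset.range (t-s), lam^(t-s-1-k) * (|U (k+1) ω|^4 + |Y (k+1) ω|^4))
        + 1024 * (|U t ω|^4 + |Y t ω|^4)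
        + 512*C0^4*W^3 *
            ((∑ k ∈ Finset.range (t-1), lam^(t-(k+1)) * (|U (k+1) ω|^4 + |Y (k+1) ω|^4))
            + (∑ k ∈ Finset.range (s-1), lam^(s-(k+1)) * (|U (t-s+k+1) ω|^4 + |Y (t-s+k+1) ω|^4)))
        + 1024*C0'^4))) / (8*σ^4) from by ring]
    rw [le_div_iff₀ h8σ]
    exact hfin
  -- integrability of H
  have hintS1 : Integrable (fun ω =>
      ∑ k ∈ Finset.range (t-s), lam^(t-s-1-k) * (|U (k+1) ω|^4 + |Y (k+1) ω|^4)) μ :=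
    integrable_finset_sum _ (fun k _ => (hint4 (k+1)).const_mul _)
  have hintS2 : Integrable (fun ω =>
      ∑ k ∈ Finset.range (t-1), lam^(t-(k+1)) * (|U (k+1) ω|^4 + |Y (k+1) ω|^4)) μ :=
    integrable_finset_sum _ (fun k _ => (hint4 (k+1)).const_mul _)
  have hintS3 : Integrable (fun ω =>
      ∑ k ∈ Finset.range (s-1), lam^(s-(k+1)) * (|U (t-s+k+1) ω|^4 + |Y (t-s+k+1) ω|^4)) μ :=
    integrable_finset_sum _ (fun k _ => (hint4 (t-s+k+1)).const_mul _)
  have hintH : Integrable H μ := by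
    rw [hHdef]
    exact ((((hintS1.const_mul _).add ((hint4 t).const_mul _)).add
      ((hintS2.add hintS3).const_mul _)).add (integrable_const _)).const_mul _
  -- nonnegativity of H
  have hH0 : ∀ ω, 0 ≤ H ω := by
    intro ω
    rw [hHdef]
    have s1 : (0:ℝ) ≤ ∑ k ∈ Finset.range (t-s), lam^(t-s-1-k) * (|U (k+1) ω|^4 + |Y (k+1) ω|^4) :=
      Finset.sum_nonneg fun k _ => by positivity
    have s2 : (0:ℝ) ≤ ∑ k ∈ Finset.range (t-1), lam^(t-(k+1)) * (|U (k+1) ω|^4 + |Y (k+1) ω|^4) :=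
      Finset.sum_nonneg fun k _ => by positivity
    have s3 : (0:ℝ) ≤ ∑ k ∈ Finset.range (s-1),
        lam^(s-(k+1)) * (|U (t-s+k+1) ω|^4 + |Y (t-s+k+1) ω|^4) :=
      Finset.sum_nonneg fun k _ => by positivity
    have := hW0.le
    positivity
  -- bound on the integral of H
  have hI1 : ∫ ω, (∑ k ∈ Finset.range (t-s), lam^(t-s-1-k) * (|U (k+1) ω|^4 + |Y (k+1) ω|^4)) ∂μ
      ≤ W * M := by
    rw [hWdef]
    exact integral_weighted_le μ (fun k ω => |U (k+1) ω|^4 + |Y (k+1) ω|^4)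
      (fun k => hint4 (k+1)) M (fun k => hM (k+1)) hM0
      (fun k => lam^(t-s-1-k)) (fun k => by positivity) (Finset.range (t-s)) _
      (geomW hlam0 hlam1 (t-s) _ (fun k hk => by (try simp only []); omega))
  have hI2 : ∫ ω, (∑ k ∈ Finset.range (t-1), lam^(t-(k+1)) * (|U (k+1) ω|^4 + |Y (k+1) ω|^4)) ∂μ
      ≤ W * M := by
    rw [hWdef]
    exact integral_weighted_le μ (fun k ω => |U (k+1) ω|^4 + |Y (k+1) ω|^4)
      (fun k => hint4 (k+1)) M (fun k => hM (k+1)) hM0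
      (fun k => lam^(t-(k+1))) (fun k => by positivity) (Finset.range (t-1)) _
      (geomW hlam0 hlam1 (t-1) _ (fun k hk => by (try simp only []); have := Finset.mem_range.mp hk; omega))
  have hI3 : ∫ ω, (∑ k ∈ Finset.range (s-1),
      lam^(s-(k+1)) * (|U (t-s+k+1) ω|^4 + |Y (t-s+k+1) ω|^4)) ∂μ ≤ W * M := by
    rw [hWdef]
    exact integral_weighted_le μ (fun k ω => |U (t-s+k+1) ω|^4 + |Y (t-s+k+1) ω|^4)
      (fun k => hint4 (t-s+k+1)) M (fun k => hM (t-s+k+1)) hM0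
      (fun k => lam^(s-(k+1))) (fun k => by positivity) (Finset.range (s-1)) _
      (geomW hlam0 hlam1 (s-1) _ (fun k hk => by (try simp only []); have := Finset.mem_range.mp hk; omega))
  have hHB : ∫ ω, H ω ∂μ
      ≤ C0^2/(8*σ^4) * (8*W^4*M + 1024*M + 1024*C0^4*W^4*M + 1024*C0'^4) := by
    have hP1 : Integrable (fun ω =>
        8*W^3 * (∑ k ∈ Finset.range (t-s), lam^(t-s-1-k) * (|U (k+1) ω|^4 + |Y (k+1) ω|^4))) μ :=
      hintS1.const_mul _
    have hP2 : Integrable (fun ω => 1024 * (|U t ω|^4 + |Y t ω|^4)) μ :=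
      (hint4 t).const_mul _
    have hP3 : Integrable (fun ω => 512*C0^4*W^3 *
        ((∑ k ∈ Finset.range (t-1), lam^(t-(k+1)) * (|U (k+1) ω|^4 + |Y (k+1) ω|^4))
        + (∑ k ∈ Finset.range (s-1),
            lam^(s-(k+1)) * (|U (t-s+k+1) ω|^4 + |Y (t-s+k+1) ω|^4)))) μ :=
      (hintS2.add hintS3).const_mul _
    have hP12 : Integrable (fun ω =>
        8*W^3 * (∑ k ∈ Finset.range (t-s), lam^(t-s-1-k) * (|U (k+1) ω|^4 + |Y (k+1) ω|^4))
        + 1024 * (|U t ω|^4 + |Y t ω|^4)) μ := hP1.add hP2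
    have hP123 : Integrable (fun ω =>
        8*W^3 * (∑ k ∈ Finset.range (t-s), lam^(t-s-1-k) * (|U (k+1) ω|^4 + |Y (k+1) ω|^4))
        + 1024 * (|U t ω|^4 + |Y t ω|^4)
        + 512*C0^4*W^3 *
            ((∑ k ∈ Finset.range (t-1), lam^(t-(k+1)) * (|U (k+1) ω|^4 + |Y (k+1) ω|^4))
            + (∑ k ∈ Finset.range (s-1),
                lam^(s-(k+1)) * (|U (t-s+k+1) ω|^4 + |Y (t-s+k+1) ω|^4)))) μ := hP12.add hP3
    have hIexp : ∫ ω, H ω ∂μ = C0^2/(8*σ^4) *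
        (8*W^3 * (∫ ω, (∑ k ∈ Finset.range (t-s),
            lam^(t-s-1-k) * (|U (k+1) ω|^4 + |Y (k+1) ω|^4)) ∂μ)
        + 1024 * (∫ ω, (|U t ω|^4 + |Y t ω|^4) ∂μ)
        + 512*C0^4*W^3 *
            ((∫ ω, (∑ k ∈ Finset.range (t-1),
                lam^(t-(k+1)) * (|U (k+1) ω|^4 + |Y (k+1) ω|^4)) ∂μ)
            + (∫ ω, (∑ k ∈ Finset.range (s-1),
                lam^(s-(k+1)) * (|U (t-s+k+1) ω|^4 + |Y (t-s+k+1) ω|^4)) ∂μ))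
        + 1024*C0'^4) := by
      simp only [hHdef]
      rw [integral_const_mul]
      congr 1
      rw [integral_add hP123 (integrable_const _),
          integral_add hP12 hP3,
          integral_add hP1 hP2,
          integral_const_mul, integral_const_mul, integral_const_mul,
          integral_add hintS2 hintS3, integral_const]
      simp [measure_univ]
    rw [hIexp]
    refine mul_le_mul_of_nonneg_left ?_ (by positivity)
    have b1 : 8*W^3 * (∫ ω, (∑ k ∈ Finset.range (t-s),
        lam^(t-s-1-k) * (|U (k+1) ω|^4 + |Y (k+1) ω|^4)) ∂μ) ≤ 8*W^3*(W*M) :=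
      mul_le_mul_of_nonneg_left hI1 (by positivity)
    have b2 : (1024:ℝ) * (∫ ω, (|U t ω|^4 + |Y t ω|^4) ∂μ) ≤ 1024*M :=
      mul_le_mul_of_nonneg_left (hM t) (by norm_num)
    have b3 : 512*C0^4*W^3 *
        ((∫ ω, (∑ k ∈ Finset.range (t-1),
            lam^(t-(k+1)) * (|U (k+1) ω|^4 + |Y (k+1) ω|^4)) ∂μ)
        + (∫ ω, (∑ k ∈ Finset.range (s-1),
            lam^(s-(k+1)) * (|U (t-s+k+1) ω|^4 + |Y (t-s+k+1) ω|^4)) ∂μ))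
        ≤ 512*C0^4*W^3*(W*M + W*M) :=
      mul_le_mul_of_nonneg_left (add_le_add hI2 hI3) (by positivity)
    linarith [b1, b2, b3]
  -- final chain
  calc ∫⁻ ω, ENNReal.ofReal
        (|gaussLogLik σ (Y t ω) (predFull f U Y θ t ω) -
          gaussLogLik σ (Y t ω) (predFM f U Y θ s t ω)| ^ 2) ∂μ
      ≤ ∫⁻ ω, ENNReal.ofReal ((lam^2)^s * H ω) ∂μ :=
        lintegral_mono fun ω => ENNReal.ofReal_le_ofReal (hpt ω)
    _ = ENNReal.ofReal (∫ ω, (lam^2)^s * H ω ∂μ) :=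
        (ofReal_integral_eq_lintegral_ofReal (hintH.const_mul _)
          (Eventually.of_forall fun ω => mul_nonneg (by positivity) (hH0 ω))).symm
    _ ≤ ENNReal.ofReal
        ((C0^2/(8*σ^4) * (8*W^4*M + 1024*M + 1024*C0^4*W^4*M + 1024*C0'^4)) * (lam^2)^s) := by
        apply ENNReal.ofReal_le_ofReal
        rw [integral_const_mul]
        calc (lam^2)^s * ∫ ω, H ω ∂μ
            ≤ (lam^2)^s * (C0^2/(8*σ^4) * (8*W^4*M + 1024*M + 1024*C0^4*W^4*M + 1024*C0'^4)) :=
              mul_le_mul_of_nonneg_left hHB (by positivity)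
          _ = (C0^2/(8*σ^4) * (8*W^4*M + 1024*M + 1024*C0^4*W^4*M + 1024*C0'^4)) * (lam^2)^s :=
              mul_comm _ _

end
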